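/- Let H be a Hermitian operator on a finite-dimensional complex Hilbert space, Θ = ω∘conj an antiunitary operator with ω unitary and ω = ωᵀ (bosonic time reversal), and suppose Θ H Θ^{-1} = H. If λ is an eigenvalue of H whose eigenspace is one-dimensional with normalized eigenvector v, then |v† ω conj(v)| = 1. -/

import Mathlib

open Matrix

/-- a nondegenerate eigenstate of a Hamiltonian with bosonic time-reversal
symmetry (Θ = ω∘conj, ω unitary symmetric, ΘHΘ⁻¹ = H, i.e. ω·conj(H)·ω† = H) has maximal
concurrence: |v† ω conj(v)| = 1 for the normalized eigenvector v. -/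
theorem stmt_19 (N : ℕ) (H : Matrix (Fin N) (Fin N) ℂ) (hH : H.IsHermitian)
    (ω : Matrix (Fin N) (Fin N) ℂ) (hω : ω * ωᴴ = 1) (hω' : ωᴴ * ω = 1) (hωsym : ω = ωᵀ)
    (hsym : ω * H.map (starRingEnd ℂ) * ωᴴ = H)
    (lam : ℝ) (v : Fin N → ℂ)
    (hv : H.mulVec v = (lam : ℂ) • v)
    (hnorm : dotProduct (star v) v = 1)
    (hnondeg : ∀ w : Fin N → ℂ, H.mulVec w = (lam : ℂ) • w → ∃ c : ℂ, w = c • v) :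
    ‖dotProduct (star v) (ω.mulVec (star v))‖ = 1 := by
  set w := ω.mulVec (star v) with hw
  -- (H.map conj).mulVec (star v) = star (H.mulVec v)
  have hmap : (H.map (starRingEnd ℂ)).mulVec (star v) = star (H.mulVec v) := by
    funext j
    simp [Matrix.mulVec, dotProduct, Matrix.map_apply, map_sum]
  have hcomm : H * ω = ω * H.map (starRingEnd ℂ) := by
    calc H * ω = ω * H.map (starRingEnd ℂ) * ωᴴ * ω := by rw [hsym]
    _ = ω * H.map (starRingEnd ℂ) * (ωᴴ * ω) := by rw [Matrix.mul_assoc]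
    _ = ω * H.map (starRingEnd ℂ) := by rw [hω', Matrix.mul_one]
  have hweig : H.mulVec w = (lam : ℂ) • w := by
    rw [hw, Matrix.mulVec_mulVec, hcomm, ← Matrix.mulVec_mulVec, hmap, hv]
    have : star ((lam : ℂ) • v) = (lam : ℂ) • star v := by
      funext j; simp [Complex.conj_ofReal]
    rw [this, Matrix.mulVec_smul]
  obtain ⟨c, hc⟩ := hnondeg w hweig
  have h1 : dotProduct (star v) w = c := by
    rw [hc, dotProduct_smul, smul_eq_mul, hnorm, mul_one]
  have h2 : dotProduct (star w) w = (starRingEnd ℂ c) * c := by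
    rw [hc]
    have : star (c • v) = (starRingEnd ℂ c) • star v := by
      funext j; simp [mul_comm]
    rw [this, dotProduct_smul, smul_dotProduct, hnorm]
    simp [smul_eq_mul]; ring
  have h3 : dotProduct (star w) w = 1 := by
    rw [hw, Matrix.star_mulVec, Matrix.dotProduct_mulVec, Matrix.vecMul_vecMul, hω',
      Matrix.vecMul_one, dotProduct_comm, star_star]
    exact hnorm
  have hcabs : (starRingEnd ℂ c) * c = 1 := by rw [← h2, h3]
  have : ‖c‖ = 1 := by
    have h := congrArg (‖·‖) hcabs
    simp only [norm_mul, Complex.norm_conj, norm_one] at h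
    nlinarith [norm_nonneg c]
  rw [h1, this]
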